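/- Let $\mu$ be a nonnegative finite Borel measure on $\mathbb{R}^N$ with $\mu(\{0\}) = 0$. Suppose $\mu$ is radial (if two balls have the same radius and their centers have the same norm, they have equal $\mu$-measure) and decreasing (if $B, B'$ are open balls of the same radius $r$ centered at $te$ and $t'e$ with $e$ a unit vector, $t \geq t' \geq 0$ and $t - r > t' + r$, then $\mu(B) \leq \mu(B')$). Then $\mu$ is absolutely continuous with respect to Lebesgue measure. -/

import Mathlib

open MeasureTheory Metric

theorem radial_decreasing_abs_continuous (N : ℕ) (hN : 1 ≤ N)
    (μ : Measure (EuclideanSpace ℝ (Fin N))) [IsFiniteMeasure μ]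
    (h0 : μ {0} = 0)
    (hrad : ∀ (a a' : EuclideanSpace ℝ (Fin N)) (r : ℝ), ‖a‖ = ‖a'‖ →
      μ (ball a r) = μ (ball a' r))
    (hdec : ∀ e : EuclideanSpace ℝ (Fin N), ‖e‖ = 1 → ∀ t t' r : ℝ,
      t' ≤ t → 0 ≤ t' → t' + r < t - r →
      μ (ball (t • e) r) ≤ μ (ball (t' • e) r)) :
    μ ≪ volume := by
  haveI : Nontrivial (EuclideanSpace ℝ (Fin N)) := by
    apply Module.nontrivial_of_finrank_pos (R := ℝ) (M := EuclideanSpace ℝ (Fin N))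
    rw [finrank_euclideanSpace_fin]; omega
  -- Key estimate via Fubini: for 2r < ‖x‖,
  -- μ(ball x r) * vol(ball 0 (‖x‖ - 2r)) ≤ μ(univ) * vol(ball 0 r)
  have key : ∀ (x : EuclideanSpace ℝ (Fin N)) (r : ℝ), 0 < r → 2 * r < ‖x‖ →
      μ (ball x r) * volume (ball (0 : EuclideanSpace ℝ (Fin N)) (‖x‖ - 2 * r))
        ≤ μ Set.univ * volume (ball (0 : EuclideanSpace ℝ (Fin N)) r) := by
    intro x r hr hrx
    have ht : 0 < ‖x‖ := by linarith
    set t := ‖x‖ with htdef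
    set e : EuclideanSpace ℝ (Fin N) := t⁻¹ • x with hedef
    have hx : x = t • e := by rw [hedef, smul_inv_smul₀ ht.ne']
    have he : ‖e‖ = 1 := by
      rw [hedef, norm_smul, norm_inv, Real.norm_eq_abs, abs_of_pos ht, ← htdef]
      field_simp
    have hpt : ∀ y ∈ ball (0 : EuclideanSpace ℝ (Fin N)) (t - 2 * r),
        μ (ball x r) ≤ μ (ball y r) := by
      intro y hy
      rw [mem_ball, dist_zero_right] at hy
      calc μ (ball x r) = μ (ball (t • e) r) := by rw [← hx]
        _ ≤ μ (ball (‖y‖ • e) r) :=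
            hdec e he t ‖y‖ r (by linarith) (norm_nonneg y) (by linarith)
        _ = μ (ball y r) := hrad _ y r (by
            rw [norm_smul, he, mul_one, Real.norm_eq_abs, abs_of_nonneg (norm_nonneg y)])
    set U : Set (EuclideanSpace ℝ (Fin N) × EuclideanSpace ℝ (Fin N)) :=
      {p | dist p.2 p.1 < r} with hUdef
    have hUopen : IsOpen U := isOpen_lt (continuous_snd.dist continuous_fst) continuous_const
    have hU : MeasurableSet U := hUopen.measurableSet
    have hball : ∀ y : EuclideanSpace ℝ (Fin N),
        μ (ball y r) = ∫⁻ z, U.indicator 1 (y, z) ∂μ := by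
      intro y
      rw [← lintegral_indicator_one (μ := μ) measurableSet_ball]
      refine lintegral_congr fun z => ?_
      by_cases h : dist z y < r <;>
        simp [hUdef, Set.indicator_apply, Set.mem_setOf_eq, mem_ball, h]
    have hmeas : Measurable fun y => μ (ball y r) := by
      simp only [hball]
      exact Measurable.lintegral_prod_right' (measurable_one.indicator hU)
    calc
      μ (ball x r) * volume (ball (0 : EuclideanSpace ℝ (Fin N)) (t - 2 * r))
          = ∫⁻ _ in ball (0 : EuclideanSpace ℝ (Fin N)) (t - 2 * r), μ (ball x r) ∂volume := by
            rw [setLIntegral_const]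
      _ ≤ ∫⁻ y in ball (0 : EuclideanSpace ℝ (Fin N)) (t - 2 * r), μ (ball y r) ∂volume :=
            setLIntegral_mono hmeas hpt
      _ ≤ ∫⁻ y, μ (ball y r) ∂volume := setLIntegral_le_lintegral _ _
      _ = ∫⁻ y, ∫⁻ z, U.indicator 1 (y, z) ∂μ ∂volume := by simp only [hball]
      _ = ∫⁻ z, ∫⁻ y, U.indicator 1 (y, z) ∂volume ∂μ :=
            lintegral_lintegral_swap (measurable_one.indicator hU).aemeasurable
      _ = ∫⁻ z, volume (ball z r) ∂μ := by
            apply lintegral_congr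
            intro z
            rw [← lintegral_indicator_one (μ := volume) measurableSet_ball]
            refine (lintegral_congr fun y => ?_).symm
            by_cases h : dist z y < r <;>
              simp [hUdef, Set.indicator_apply, Set.mem_setOf_eq, mem_ball, dist_comm, h]
      _ = ∫⁻ _, volume (ball (0 : EuclideanSpace ℝ (Fin N)) r) ∂μ := by
            simp only [Measure.addHaar_ball_center]
      _ = μ Set.univ * volume (ball (0 : EuclideanSpace ℝ (Fin N)) r) := by
            rw [lintegral_const, mul_comm]
  -- Consequence: on {‖x‖ ≥ a}, μ(closedBall x r) ≤ c * vol(closedBall x r) for small r.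
  have key2 : ∀ a : ℝ, 0 < a → ∃ c : NNReal,
      ∀ x : EuclideanSpace ℝ (Fin N), a ≤ ‖x‖ → ∀ r : ℝ, 0 < r → r ≤ a / 8 →
      μ (closedBall x r) ≤ (c : ENNReal) * volume (closedBall x r) := by
    intro a ha
    set V := volume (ball (0 : EuclideanSpace ℝ (Fin N)) (a / 2)) with hVdef
    have hV0 : V ≠ 0 := (measure_ball_pos _ _ (by linarith)).ne'
    have hVtop : V ≠ ⊤ := measure_ball_lt_top.ne
    set K : ENNReal := μ Set.univ * ENNReal.ofReal (2 ^ N) / V with hKdef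
    have hKtop : K ≠ ⊤ := by
      rw [hKdef]
      exact (ENNReal.div_lt_top (ENNReal.mul_ne_top (measure_ne_top μ _)
        ENNReal.ofReal_ne_top) hV0).ne
    refine ⟨K.toNNReal, ?_⟩
    intro x hx r hr hra
    rw [ENNReal.coe_toNNReal hKtop]
    have h1 : μ (closedBall x r) ≤ μ (ball x (2 * r)) :=
      measure_mono (closedBall_subset_ball (by linarith))
    have h2 := key x (2 * r) (by linarith) (by linarith)
    have h3 : V ≤ volume (ball (0 : EuclideanSpace ℝ (Fin N)) (‖x‖ - 2 * (2 * r))) :=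
      measure_mono (ball_subset_ball (by linarith))
    have h5 : volume (ball (0 : EuclideanSpace ℝ (Fin N)) (2 * r))
        = ENNReal.ofReal (2 ^ N) * volume (ball (0 : EuclideanSpace ℝ (Fin N)) r) := by
      rw [Measure.addHaar_ball_mul volume (0 : EuclideanSpace ℝ (Fin N))
        (by norm_num : (0:ℝ) ≤ 2) r, finrank_euclideanSpace_fin]
    have h6 : volume (ball (0 : EuclideanSpace ℝ (Fin N)) r) = volume (closedBall x r) := by
      rw [Measure.addHaar_closedBall_eq_addHaar_ball]
      exact (Measure.addHaar_ball_center volume x r).symm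
    have h7 : μ (closedBall x r) * V
        ≤ μ Set.univ * ENNReal.ofReal (2 ^ N) * volume (closedBall x r) := by
      calc μ (closedBall x r) * V ≤ μ (ball x (2 * r)) * V := mul_le_mul_left h1 _
        _ ≤ μ (ball x (2 * r))
            * volume (ball (0 : EuclideanSpace ℝ (Fin N)) (‖x‖ - 2 * (2 * r))) :=
              mul_le_mul_right h3 _
        _ ≤ μ Set.univ * volume (ball (0 : EuclideanSpace ℝ (Fin N)) (2 * r)) := h2
        _ = μ Set.univ * ENNReal.ofReal (2 ^ N) * volume (closedBall x r) := by
              rw [h5, h6, mul_assoc]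
    rw [hKdef]
    rw [div_eq_mul_inv, mul_right_comm, ← div_eq_mul_inv,
      ENNReal.le_div_iff_mul_le (Or.inl hV0) (Or.inl hVtop)]
    exact h7
  -- Covering argument via the Besicovitch Vitali family.
  intro s hs
  set v := Besicovitch.vitaliFamily μ with hvdef
  have hannulus : ∀ n : ℕ, μ (s ∩ {x : EuclideanSpace ℝ (Fin N) | 1 / (n + 1 : ℝ) ≤ ‖x‖}) = 0 := by
    intro n
    have han : (0 : ℝ) < 1 / (n + 1) := by positivity
    obtain ⟨c, hc⟩ := key2 _ han
    have hle : μ (s ∩ {x : EuclideanSpace ℝ (Fin N) | 1 / (n + 1 : ℝ) ≤ ‖x‖})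
        ≤ (c • volume) (s ∩ {x : EuclideanSpace ℝ (Fin N) | 1 / (n + 1 : ℝ) ≤ ‖x‖}) := by
      apply v.measure_le_of_frequently_le (c • volume) Measure.AbsolutelyContinuous.rfl
      intro x hx
      apply (Besicovitch.tendsto_filterAt μ x).frequently
      have hev : ∀ᶠ ρ in nhdsWithin (0:ℝ) (Set.Ioi 0),
          μ (closedBall x ρ) ≤ (c • volume) (closedBall x ρ) := by
        filter_upwards [Ioc_mem_nhdsGT (by positivity : (0:ℝ) < (1 / (n + 1 : ℝ)) / 8)]
          with ρ hρ
        simpa [Measure.smul_apply, smul_eq_mul] using hc x hx.2 ρ hρ.1 hρ.2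
      exact hev.frequently
    refine le_antisymm ?_ zero_le
    calc μ (s ∩ {x : EuclideanSpace ℝ (Fin N) | 1 / (n + 1 : ℝ) ≤ ‖x‖})
        ≤ (c • volume) (s ∩ {x : EuclideanSpace ℝ (Fin N) | 1 / (n + 1 : ℝ) ≤ ‖x‖}) := hle
      _ ≤ (c • volume) s := measure_mono Set.inter_subset_left
      _ = c * volume s := by simp [Measure.smul_apply]
      _ = 0 := by rw [hs, mul_zero]
  have hsub : s ⊆ {(0 : EuclideanSpace ℝ (Fin N))}
      ∪ ⋃ n : ℕ, s ∩ {x : EuclideanSpace ℝ (Fin N) | 1 / (n + 1 : ℝ) ≤ ‖x‖} := by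
    intro x hxs
    by_cases hx0 : x = 0
    · exact Or.inl (by simp [hx0])
    · right
      have hxn : 0 < ‖x‖ := norm_pos_iff.mpr hx0
      obtain ⟨n, hn⟩ := exists_nat_one_div_lt hxn
      exact Set.mem_iUnion.mpr ⟨n, hxs, hn.le⟩
  refine le_antisymm ?_ zero_le
  calc μ s ≤ μ ({(0 : EuclideanSpace ℝ (Fin N))}
        ∪ ⋃ n : ℕ, s ∩ {x : EuclideanSpace ℝ (Fin N) | 1 / (n + 1 : ℝ) ≤ ‖x‖}) :=
        measure_mono hsub
    _ ≤ μ {(0 : EuclideanSpace ℝ (Fin N))}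
        + μ (⋃ n : ℕ, s ∩ {x : EuclideanSpace ℝ (Fin N) | 1 / (n + 1 : ℝ) ≤ ‖x‖}) :=
        measure_union_le _ _
    _ ≤ 0 + ∑' n : ℕ, μ (s ∩ {x : EuclideanSpace ℝ (Fin N) | 1 / (n + 1 : ℝ) ≤ ‖x‖}) := by
        rw [h0]; exact add_le_add_right (measure_iUnion_le _) _
    _ = 0 := by rw [zero_add, tsum_congr hannulus, tsum_zero]
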